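/- Levy–Desplanques type theorem for irreducible matrices: let M be an irreducible n×n complex matrix such that |M_{ii}| ≥ ∑_{j≠i}|M_{ij}| for every i, with strict inequality for at least one i. Then det(M) ≠ 0. -/

import Mathlib

open Matrix

/-- Levy–Desplanques type: an irreducible complex matrix that is
diagonally dominant, with strict dominance in at least one row, has nonzero
determinant. -/
theorem stmt14 {n : ℕ} (M : Matrix (Fin n) (Fin n) ℂ)
    (hirr : ∀ i j : Fin n,
      Relation.ReflTransGen (fun a b => a ≠ b ∧ M a b ≠ 0) i j)
    (hdom : ∀ i, ∑ j ∈ Finset.univ.erase i, ‖M i j‖ ≤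
      ‖M i i‖)
    (hstrict : ∃ i, ∑ j ∈ Finset.univ.erase i, ‖M i j‖ <
      ‖M i i‖) :
    M.det ≠ 0 := by
  intro hdet
  obtain ⟨v, hv, hMv⟩ := (Matrix.exists_mulVec_eq_zero_iff).2 hdet
  -- the key row inequality coming from M v = 0
  have key : ∀ i, ‖M i i‖ * ‖v i‖ ≤
      ∑ j ∈ Finset.univ.erase i, ‖M i j‖ * ‖v j‖ := by
    intro i
    have h0 : ∑ j, M i j * v j = 0 := congrFun hMv i
    have hsplit := Finset.sum_erase_add Finset.univ (fun j => M i j * v j)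
      (Finset.mem_univ i)
    rw [h0] at hsplit
    have heq : M i i * v i = -∑ j ∈ Finset.univ.erase i, M i j * v j := by
      linear_combination hsplit
    calc ‖M i i‖ * ‖v i‖
        = ‖M i i * v i‖ := (norm_mul _ _).symm
      _ = ‖∑ j ∈ Finset.univ.erase i, M i j * v j‖ := by
          rw [heq, norm_neg]
      _ ≤ ∑ j ∈ Finset.univ.erase i, ‖M i j * v j‖ :=
          norm_sum_le _ _
      _ = ∑ j ∈ Finset.univ.erase i, ‖M i j‖ * ‖v j‖ := by
          simp [norm_mul]
  -- pick an index of maximal modulus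
  obtain ⟨j0, hj0⟩ := Function.ne_iff.1 hv
  obtain ⟨i0, -, hi0⟩ := Finset.exists_max_image Finset.univ
    (fun j => ‖v j‖) ⟨j0, Finset.mem_univ _⟩
  set m := ‖v i0‖ with hm
  have hle : ∀ j, ‖v j‖ ≤ m := fun j => hi0 j (Finset.mem_univ j)
  have hmpos : 0 < m := lt_of_lt_of_le (by simpa using hj0) (hle j0)
  -- propagation of maximality along the graph
  have prop : ∀ i j : Fin n,
      Relation.ReflTransGen (fun a b => a ≠ b ∧ M a b ≠ 0) i j →
      ‖v i‖ = m → ‖v j‖ = m := by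
    intro i j h
    induction h with
    | refl => exact id
    | tail hab hbc ih =>
      intro hi
      rename_i b c
      obtain ⟨hne, hM⟩ := hbc
      have hb : ‖v b‖ = m := ih hi
      by_contra hc
      have hclt : ‖v c‖ < m := lt_of_le_of_ne (hle c) hc
      have hlt : ∑ j ∈ Finset.univ.erase b, ‖M b j‖ * ‖v j‖ <
          ∑ j ∈ Finset.univ.erase b, ‖M b j‖ * m := by
        refine Finset.sum_lt_sum (fun j _ => ?_) ⟨c, ?_, ?_⟩
        · exact mul_le_mul_of_nonneg_left (hle j) (norm_nonneg _)
        · exact Finset.mem_erase.2 ⟨fun h => hne h.symm, Finset.mem_univ _⟩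
        · exact mul_lt_mul_of_pos_left hclt (norm_pos_iff.2 hM)
      have h1 := key b
      rw [hb] at h1
      have h2 : ∑ j ∈ Finset.univ.erase b, ‖M b j‖ * m ≤
          ‖M b b‖ * m := by
        rw [← Finset.sum_mul]
        exact mul_le_mul_of_nonneg_right (hdom b) hmpos.le
      exact absurd (lt_of_le_of_lt h1 (lt_of_lt_of_le hlt h2)) (lt_irrefl _)
  -- contradiction at the strictly dominant row
  obtain ⟨k, hk⟩ := hstrict
  have hvk : ‖v k‖ = m := prop i0 k (hirr i0 k) rfl
  have h1 := key k
  rw [hvk] at h1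
  have h2 : ∑ j ∈ Finset.univ.erase k, ‖M k j‖ * ‖v j‖ ≤
      ∑ j ∈ Finset.univ.erase k, ‖M k j‖ * m :=
    Finset.sum_le_sum fun j _ =>
      mul_le_mul_of_nonneg_left (hle j) (norm_nonneg _)
  have h3 : ∑ j ∈ Finset.univ.erase k, ‖M k j‖ * m <
      ‖M k k‖ * m := by
    rw [← Finset.sum_mul]
    exact mul_lt_mul_of_pos_right hk hmpos
  exact absurd (lt_of_le_of_lt h1 (lt_of_le_of_lt h2 h3)) (lt_irrefl _)
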